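/- Work with a finite oriented multigraph given by finite types V (vertices) and E (edges) together with maps s t : E → V. Assume the multigraph has trivial cycle space, i.e., every x : E → ℤ with ∂.mulVec x = 0 satisfies x = 0. Let p be a natural number, let θ : Equiv.Perm V satisfy θ ^ p = 1, and let M : Matrix E E ℤ be a chain map over θ. Then M ^ p = 1 (the identity matrix). -/

import Mathlib

/-- The boundary matrix of a finite oriented multigraph with source map `s`
and target map `t`: `∂ v e = [v = t e] - [v = s e]`. -/
def boundaryMatrix {V E : Type*} [DecidableEq V] (s t : E → V) : Matrix V E ℤ :=
  fun v e => (if v = t e then 1 else 0) - (if v = s e then 1 else 0)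

/-- The permutation matrix of `θ`: `P_θ u w = [u = θ w]`. -/
def permMatrix {V : Type*} [DecidableEq V] (θ : Equiv.Perm V) : Matrix V V ℤ :=
  fun u w => if u = θ w then 1 else 0

/-- `M` is a chain map over the vertex permutation `θ`: `∂ * M = P_θ * ∂`. -/
def IsChainMap {V E : Type*} [DecidableEq V] [Fintype V] [Fintype E]
    (s t : E → V) (θ : Equiv.Perm V) (M : Matrix E E ℤ) : Prop :=
  boundaryMatrix s t * M = permMatrix θ * boundaryMatrix s t

/-- `M` is HTC (homotopic-to-a-constant-map condition): `M` annihilates the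
cycle space, i.e. the kernel of the boundary matrix. -/
def IsHTC {V E : Type*} [DecidableEq V] [Fintype E]
    (s t : E → V) (M : Matrix E E ℤ) : Prop :=
  ∀ x : E → ℤ, (boundaryMatrix s t).mulVec x = 0 → M.mulVec x = 0

/-- The multigraph has no loops: `s e ≠ t e` for every edge. -/
def NoLoops {V E : Type*} (s t : E → V) : Prop :=
  ∀ e : E, s e ≠ t e

/-- The multigraph is connected: the smallest equivalence relation relating
`s e` and `t e` for every edge `e` is the total relation. -/
def IsConn {V E : Type*} (s t : E → V) : Prop :=
  ∀ u v : V, Relation.EqvGen (fun a b => ∃ e : E, s e = a ∧ t e = b) u v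

lemma permMatrix_one {V : Type*} [DecidableEq V] [Fintype V] :
    permMatrix (1 : Equiv.Perm V) = 1 := by
  ext u w
  simp [permMatrix, Matrix.one_apply]
  congr

lemma permMatrix_mul {V : Type*} [DecidableEq V] [Fintype V] (θ σ : Equiv.Perm V) :
    permMatrix (θ * σ) = permMatrix θ * permMatrix σ := by
  ext u w
  simp [permMatrix, Matrix.mul_apply, Equiv.Perm.mul_apply]
  congr

theorem pow_eq_one_of_trivial_cycle_space
    {V E : Type*} [Fintype V] [DecidableEq V] [Fintype E] [DecidableEq E]
    (s t : E → V)
    (htriv : ∀ x : E → ℤ, (boundaryMatrix s t).mulVec x = 0 → x = 0)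
    (p : ℕ) (θ : Equiv.Perm V) (hθ : θ ^ p = 1)
    (M : Matrix E E ℤ) (hM : IsChainMap s t θ M) :
    M ^ p = 1 := by
  have key : ∀ n : ℕ, boundaryMatrix s t * M ^ n = permMatrix (θ ^ n) * boundaryMatrix s t := by
    intro n
    induction n with
    | zero => simp [permMatrix_one]
    | succ n ih =>
      rw [pow_succ, ← Matrix.mul_assoc, ih, Matrix.mul_assoc, hM, pow_succ,
        permMatrix_mul, Matrix.mul_assoc]
  have hker : boundaryMatrix s t * (M ^ p - 1) = 0 := by
    rw [Matrix.mul_sub, key p, hθ, permMatrix_one, Matrix.one_mul, Matrix.mul_one, sub_self]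
  have hcol : ∀ x : E → ℤ, (M ^ p - 1).mulVec x = 0 := by
    intro x
    apply htriv
    rw [Matrix.mulVec_mulVec, hker, Matrix.zero_mulVec]
  have : (M ^ p - 1) = 0 := by
    ext i j
    have := congrFun (hcol (Pi.single j 1)) i
    simpa [Matrix.mulVec_single] using this
  exact sub_eq_zero.mp this
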